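/- Let m, n, N be positive integers and let q, q(1), …, q(N) ∈ [1,∞)^m be such that the vector (1/q_1, …, 1/q_m) lies in the convex hull of the vectors (1/q_1(k), …, 1/q_m(k)), k = 1, …, N, with convex coefficients θ_1, …, θ_N. Then for every scalar matrix a = (a_i)_{i ∈ {1,…,n}^m}, the mixed norm satisfies ‖a‖_q ≤ ∏_{k=1}^N ‖a‖_{q(k)}^{θ_k}. -/

import Mathlib

open Finset

/-- The mixed `ℓ_{p_1}(ℓ_{p_2}(⋯ℓ_{p_m}))` norm of a scalar matrix
`a = (a_i)_{i ∈ {1,…,n}^m}`. -/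
noncomputable def mixedNorm (n : ℕ) : (m : ℕ) → (Fin m → ℝ) → ((Fin m → Fin n) → ℂ) → ℝ
  | 0, _, a => ‖a (fun i => i.elim0)‖
  | m + 1, p, a =>
      (∑ j : Fin n,
        (mixedNorm n m (fun i => p i.succ) (fun f => a (Fin.cons j f))) ^ p 0) ^ (1 / p 0)

/-- Generalized Hölder inequality with weights summing to one. -/
lemma holder_gen {ι κ : Type*} (s : Finset ι) (t : Finset κ) (w : κ → ℝ) (f : κ → ι → ℝ)
    (hw : ∀ k ∈ t, 0 ≤ w k) (hw1 : ∑ k ∈ t, w k = 1)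
    (hf : ∀ k ∈ t, ∀ j ∈ s, 0 ≤ f k j) :
    ∑ j ∈ s, ∏ k ∈ t, f k j ^ w k ≤ ∏ k ∈ t, (∑ j ∈ s, f k j) ^ w k := by
  by_cases A : ∃ k ∈ t, w k ≠ 0 ∧ ∑ j ∈ s, f k j = 0
  · rcases A with ⟨k, hk, hwk, hS⟩
    have hf0 : ∀ j ∈ s, f k j = 0 := fun j hj =>
      (Finset.sum_eq_zero_iff_of_nonneg (fun j hj => hf k hk j hj)).1 hS j hj
    have hz : ∑ j ∈ s, ∏ k' ∈ t, f k' j ^ w k' = 0 := by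
      refine Finset.sum_eq_zero fun j hj => Finset.prod_eq_zero hk ?_
      rw [hf0 j hj, Real.zero_rpow hwk]
    rw [hz]
    exact Finset.prod_nonneg fun k hk =>
      Real.rpow_nonneg (Finset.sum_nonneg (hf k hk)) _
  push_neg at A
  set S : κ → ℝ := fun k => ∑ j ∈ s, f k j with hSdef
  have hS0 : ∀ k ∈ t, 0 ≤ S k := fun k hk => Finset.sum_nonneg (hf k hk)
  have key : ∀ j ∈ s, ∏ k ∈ t, f k j ^ w k
      = (∏ k ∈ t, S k ^ w k) * ∏ k ∈ t, (f k j / S k) ^ w k := by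
    intro j hj
    rw [← Finset.prod_mul_distrib]
    refine Finset.prod_congr rfl fun k hk => ?_
    by_cases hwk : w k = 0
    · simp [hwk]
    · have hSk : S k ≠ 0 := A k hk hwk
      rw [← Real.mul_rpow (hS0 k hk) (div_nonneg (hf k hk j hj) (hS0 k hk)),
        mul_comm, div_mul_cancel₀ _ hSk]
  calc ∑ j ∈ s, ∏ k ∈ t, f k j ^ w k
      = (∏ k ∈ t, S k ^ w k) * ∑ j ∈ s, ∏ k ∈ t, (f k j / S k) ^ w k := by
        rw [Finset.mul_sum]; exact Finset.sum_congr rfl key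
    _ ≤ (∏ k ∈ t, S k ^ w k) * ∑ j ∈ s, ∑ k ∈ t, w k * (f k j / S k) := by
        refine mul_le_mul_of_nonneg_left ?_
          (Finset.prod_nonneg fun k hk => Real.rpow_nonneg (hS0 k hk) _)
        exact Finset.sum_le_sum fun j hj =>
          Real.geom_mean_le_arith_mean_weighted t w _ hw hw1
            (fun k hk => div_nonneg (hf k hk j hj) (hS0 k hk))
    _ = (∏ k ∈ t, S k ^ w k) * ∑ k ∈ t, w k * (S k / S k) := by
        rw [Finset.sum_comm]
        congr 1
        refine Finset.sum_congr rfl fun k hk => ?_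
        rw [← Finset.mul_sum, ← Finset.sum_div]
    _ ≤ ∏ k ∈ t, S k ^ w k := by
        have h1 : ∑ k ∈ t, w k * (S k / S k) = 1 := by
          rw [← hw1]
          refine Finset.sum_congr rfl fun k hk => ?_
          by_cases hwk : w k = 0
          · simp [hwk]
          · rw [div_self (A k hk hwk), mul_one]
        exact le_of_eq (by rw [h1, mul_one])

lemma mixedNorm_nonneg (n : ℕ) :
    ∀ (m : ℕ) (p : Fin m → ℝ) (a : (Fin m → Fin n) → ℂ), 0 ≤ mixedNorm n m p a
  | 0, p, a => by simp only [mixedNorm]; exact norm_nonneg _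
  | m + 1, p, a => by
      simp only [mixedNorm]
      exact Real.rpow_nonneg (Finset.sum_nonneg fun j _ =>
        Real.rpow_nonneg (mixedNorm_nonneg n m _ _) _) _

lemma mixedNorm_key (n N : ℕ) (θ : Fin N → ℝ) (hθ0 : ∀ k, 0 ≤ θ k) (hθsum : ∑ k, θ k = 1) :
    ∀ (m : ℕ) (q : Fin m → ℝ) (Q : Fin N → Fin m → ℝ), (∀ i, 1 ≤ q i) → (∀ k i, 1 ≤ Q k i) →
    (∀ i, 1 / q i = ∑ k, θ k / Q k i) → ∀ a : (Fin m → Fin n) → ℂ,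
    mixedNorm n m q a ≤ ∏ k, mixedNorm n m (Q k) a ^ θ k := by
  intro m
  induction m with
  | zero =>
    intro q Q hq hQ hconv a
    simp only [mixedNorm]
    have : (‖a fun i => i.elim0‖ : ℝ) ^ (∑ k, θ k) = ∏ k, ‖a fun i => i.elim0‖ ^ θ k :=
      Real.rpow_sum_of_nonneg (norm_nonneg _) (fun k _ => hθ0 k)
    rw [hθsum, Real.rpow_one] at this
    exact le_of_eq this
  | succ m ih =>
    intro q Q hq hQ hconv a
    have hq0 : (0:ℝ) < q 0 := lt_of_lt_of_le one_pos (hq 0)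
    have hQ0 : ∀ k, (0:ℝ) < Q k 0 := fun k => lt_of_lt_of_le one_pos (hQ k 0)
    simp only [mixedNorm]
    set F : Fin n → ℝ :=
      fun j => mixedNorm n m (fun i => q i.succ) (fun f => a (Fin.cons j f)) with hF
    set G : Fin N → Fin n → ℝ :=
      fun k j => mixedNorm n m (fun i => Q k i.succ) (fun f => a (Fin.cons j f)) with hG
    have hFnn : ∀ j, 0 ≤ F j := fun j => mixedNorm_nonneg n m _ _
    have hGnn : ∀ k j, 0 ≤ G k j := fun k j => mixedNorm_nonneg n m _ _
    have hIH : ∀ j, F j ≤ ∏ k, G k j ^ θ k := fun j =>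
      ih (fun i => q i.succ) (fun k i => Q k i.succ) (fun i => hq i.succ)
        (fun k i => hQ k i.succ) (fun i => hconv i.succ) _
    set w : Fin N → ℝ := fun k => θ k * q 0 / Q k 0 with hw
    have hwnn : ∀ k, 0 ≤ w k := fun k =>
      div_nonneg (mul_nonneg (hθ0 k) hq0.le) (hQ0 k).le
    have hwsum : ∑ k, w k = 1 := by
      have h0 := hconv 0
      calc ∑ k, θ k * q 0 / Q k 0 = q 0 * ∑ k, θ k / Q k 0 := by
            rw [Finset.mul_sum]; exact Finset.sum_congr rfl fun k _ => by ring
        _ = q 0 * (1 / q 0) := by rw [← h0]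
        _ = 1 := by field_simp
    have step1 : ∀ j, F j ^ q 0 ≤ ∏ k, (G k j ^ Q k 0) ^ w k := by
      intro j
      calc F j ^ q 0 ≤ (∏ k, G k j ^ θ k) ^ q 0 :=
            Real.rpow_le_rpow (hFnn j) (hIH j) hq0.le
        _ = ∏ k, (G k j ^ θ k) ^ q 0 :=
            (Real.finset_prod_rpow _ _ (fun k _ => Real.rpow_nonneg (hGnn k j) _) _).symm
        _ = ∏ k, (G k j ^ Q k 0) ^ w k := by
            refine Finset.prod_congr rfl fun k _ => ?_
            rw [← Real.rpow_mul (hGnn k j), ← Real.rpow_mul (hGnn k j)]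
            congr 1
            field_simp [hw, (hQ0 k).ne']
            simp only [hw]; field_simp [(hQ0 k).ne']
    have hSnn : ∀ k, (0:ℝ) ≤ ∑ j, G k j ^ Q k 0 := fun k =>
      Finset.sum_nonneg fun j _ => Real.rpow_nonneg (hGnn k j) _
    have step2 : ∑ j, F j ^ q 0 ≤ ∏ k, (∑ j, G k j ^ Q k 0) ^ w k :=
      le_trans (Finset.sum_le_sum fun j _ => step1 j)
        (holder_gen Finset.univ Finset.univ w (fun k j => G k j ^ Q k 0)
          (fun k _ => hwnn k) hwsum (fun k _ j _ => Real.rpow_nonneg (hGnn k j) _))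
    calc (∑ j, F j ^ q 0) ^ (1 / q 0)
        ≤ (∏ k, (∑ j, G k j ^ Q k 0) ^ w k) ^ (1 / q 0) :=
          Real.rpow_le_rpow
            (Finset.sum_nonneg fun j _ => Real.rpow_nonneg (hFnn j) _) step2
            (by positivity)
      _ = ∏ k, ((∑ j, G k j ^ Q k 0) ^ (1 / Q k 0)) ^ θ k := by
          rw [← Real.finset_prod_rpow _ _
            (fun k _ => Real.rpow_nonneg (hSnn k) _) _]
          refine Finset.prod_congr rfl fun k _ => ?_
          rw [← Real.rpow_mul (hSnn k), ← Real.rpow_mul (hSnn k)]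
          congr 1
          field_simp [hw, hq0.ne', (hQ0 k).ne']
          simp only [hw]; field_simp [(hQ0 k).ne']

/-- **Interpolation procedure** (Albuquerque–Bayart–Pellegrino–Seoane):
if `(1/q_1,…,1/q_m)` lies in the convex hull of the points
`(1/q_1(k),…,1/q_m(k))`, `k = 1,…,N`, with coefficients `θ_k`, then for every
scalar matrix `a` one has `‖a‖_q ≤ ∏_k ‖a‖_{q(k)}^{θ_k}` in mixed norms. -/
theorem mixedNorm_interpolation (m n N : ℕ) (hm : 0 < m) (hn : 0 < n) (hN : 0 < N)
    (q : Fin m → ℝ) (Q : Fin N → Fin m → ℝ) (θ : Fin N → ℝ)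
    (hq : ∀ i, 1 ≤ q i) (hQ : ∀ k i, 1 ≤ Q k i)
    (hθ0 : ∀ k, 0 ≤ θ k) (hθ1 : ∀ k, θ k ≤ 1) (hθsum : ∑ k, θ k = 1)
    (hconv : ∀ i, 1 / q i = ∑ k, θ k / Q k i)
    (a : (Fin m → Fin n) → ℂ) :
    mixedNorm n m q a ≤ ∏ k, (mixedNorm n m (Q k) a) ^ θ k :=
  mixedNorm_key n N θ hθ0 hθsum m q Q hq hQ hconv a
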